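/- In the bidirectional structural model under Assumption 2, suppose σ > 0, γ1 > γ2², μxz ≠ 0, μyw ≠ 0 and βxy·βyx ≠ 1, and let k1 = ξyz/ξxz and k2 = ξxw/ξyw be the Probit coefficient ratios. Then the discriminant quantity Δ1 = γ1·(k1² − 1)·(k2² − 1) + γ2²·(k1 − k2)² is nonnegative. -/

import Mathlib

/-- nonnegativity of the discriminant quantity Δ1 in the
sensitivity analysis under Assumption 2. -/
theorem stmt_13 (μx0 μy0 μxz μyw βxy βyx σ γ1 γ2 : ℝ)
    (hσ : 0 < σ) (hγ : γ2 ^ 2 < γ1)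
    (hμxz : μxz ≠ 0) (hμyw : μyw ≠ 0) (hβ : βxy * βyx ≠ 1)
    (c lam1 lam2 ξxz ξxw ξyz ξyw k1 k2 : ℝ)
    (hc : c = 1 / (1 - βxy * βyx))
    (hlam1 : lam1 = σ ^ 2 * c ^ 2 * (γ1 + 2 * βyx * γ2 + βyx ^ 2))
    (hlam2 : lam2 = σ ^ 2 * c ^ 2 * (βxy ^ 2 * γ1 + 2 * βxy * γ2 + 1))
    (hξxz : ξxz = c * μxz / Real.sqrt lam1)
    (hξxw : ξxw = c * βyx * μyw / Real.sqrt lam1)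
    (hξyz : ξyz = c * βxy * μxz / Real.sqrt lam2)
    (hξyw : ξyw = c * μyw / Real.sqrt lam2)
    (hk1 : k1 = ξyz / ξxz) (hk2 : k2 = ξxw / ξyw) :
    0 ≤ γ1 * (k1 ^ 2 - 1) * (k2 ^ 2 - 1) + γ2 ^ 2 * (k1 - k2) ^ 2 := by
  have h1 : 1 - βxy * βyx ≠ 0 := by
    intro h; apply hβ; linarith [sub_eq_zero.mp h]
  have hc0 : c ≠ 0 := by rw [hc]; exact one_div_ne_zero h1
  have hγ1 : 0 < γ1 := lt_of_le_of_lt (sq_nonneg γ2) hγ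
  have hA : 0 < γ1 + 2 * βyx * γ2 + βyx ^ 2 := by nlinarith [sq_nonneg (βyx + γ2)]
  have hB : 0 < βxy ^ 2 * γ1 + 2 * βxy * γ2 + 1 := by
    nlinarith [sq_nonneg (βxy * γ1 + γ2)]
  have hc2 : 0 < c ^ 2 := pow_two_pos_of_ne_zero hc0
  have hσ2 : 0 < σ ^ 2 := pow_pos hσ 2
  have hl1 : 0 < lam1 := by rw [hlam1]; exact mul_pos (mul_pos hσ2 hc2) hA
  have hl2 : 0 < lam2 := by rw [hlam2]; exact mul_pos (mul_pos hσ2 hc2) hB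
  have hs1 : 0 < Real.sqrt lam1 := Real.sqrt_pos.mpr hl1
  have hs2 : 0 < Real.sqrt lam2 := Real.sqrt_pos.mpr hl2
  have hk1' : k1 = βxy * Real.sqrt lam1 / Real.sqrt lam2 := by
    rw [hk1, hξyz, hξxz]
    field_simp
  have hk2' : k2 = βyx * Real.sqrt lam2 / Real.sqrt lam1 := by
    rw [hk2, hξxw, hξyw]
    field_simp
  have hk1sq : k1 ^ 2 = βxy ^ 2 * lam1 / lam2 := by
    rw [hk1', div_pow, mul_pow, Real.sq_sqrt hl1.le, Real.sq_sqrt hl2.le]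
  have hk2sq : k2 ^ 2 = βyx ^ 2 * lam2 / lam1 := by
    rw [hk2', div_pow, mul_pow, Real.sq_sqrt hl2.le, Real.sq_sqrt hl1.le]
  have hk12 : k1 * k2 = βxy * βyx := by
    rw [hk1', hk2']
    field_simp
  have hexp : γ1 * (k1 ^ 2 - 1) * (k2 ^ 2 - 1) + γ2 ^ 2 * (k1 - k2) ^ 2
      = γ1 * (k1 ^ 2 - 1) * (k2 ^ 2 - 1)
        + γ2 ^ 2 * (k1 ^ 2 - 2 * (k1 * k2) + k2 ^ 2) := by ring
  rw [hexp, hk1sq, hk2sq, hk12]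
  have key : (γ1 * (βxy ^ 2 * lam1 / lam2 - 1) * (βyx ^ 2 * lam2 / lam1 - 1)
      + γ2 ^ 2 * (βxy ^ 2 * lam1 / lam2 - 2 * (βxy * βyx) + βyx ^ 2 * lam2 / lam1))
      * (lam1 * lam2)
      = (σ ^ 2 * c ^ 2 * ((1 - βxy * βyx)
          * (γ1 * (1 + βxy * βyx) + γ2 * (βyx + βxy * γ1)))) ^ 2 := by
    have hl1' := hl1.ne'
    have hl2' := hl2.ne'
    field_simp
    rw [hlam1, hlam2]
    ring
  have h0 : 0 ≤ (γ1 * (βxy ^ 2 * lam1 / lam2 - 1) * (βyx ^ 2 * lam2 / lam1 - 1)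
      + γ2 ^ 2 * (βxy ^ 2 * lam1 / lam2 - 2 * (βxy * βyx) + βyx ^ 2 * lam2 / lam1))
      * (lam1 * lam2) := by rw [key]; exact sq_nonneg _
  exact nonneg_of_mul_nonneg_right (by linarith [h0]) (mul_pos hl1 hl2)
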